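/- Let m ≥ 1 and let (F_s)_{s∈ℕ} be a sequence of seminorms on ℝ^m (that is, F_s : Seminorm ℝ (Fin m → ℝ)) such that for every s and every a ∈ ℝ^m, max_{1≤j≤m} |a_j| ≤ F_s(a) ≤ Σ_{j=1}^m |a_j|. Let F : ℝ^m → ℝ be such that F_s(a) → F(a) as s → ∞ for every a ∈ ℝ^m. Then for every ε > 0 there exists s₀ ∈ ℕ such that for every s ≥ s₀ and every a ∈ ℝ^m, F(a) ≤ (1+ε)·F_s(a) and F_s(a) ≤ (1+ε)·F(a). -/

import Mathlib

open Filter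

theorem stmt4 (m : ℕ) (hm : 1 ≤ m)
    (F : ℕ → Seminorm ℝ (Fin m → ℝ)) (Flim : (Fin m → ℝ) → ℝ)
    (hlow : ∀ (s : ℕ) (a : Fin m → ℝ) (j : Fin m), |a j| ≤ F s a)
    (hup : ∀ (s : ℕ) (a : Fin m → ℝ), F s a ≤ ∑ j, |a j|)
    (hconv : ∀ a : Fin m → ℝ, Tendsto (fun s => F s a) atTop (nhds (Flim a))) :
    ∀ ε : ℝ, 0 < ε → ∃ s₀ : ℕ, ∀ s ≥ s₀, ∀ a : Fin m → ℝ,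
      Flim a ≤ (1 + ε) * F s a ∧ F s a ≤ (1 + ε) * Flim a := by
  intro ε hε
  have hm' : (0:ℝ) < m := by exact_mod_cast Nat.lt_of_lt_of_le Nat.zero_lt_one hm
  -- ℓ¹ distance bound
  have hsum : ∀ a b : Fin m → ℝ, (∑ j, |a j - b j|) ≤ m * dist a b := by
    intro a b
    calc (∑ j, |a j - b j|) ≤ ∑ _j : Fin m, dist a b := by
          apply Finset.sum_le_sum
          intro j _
          rw [← Real.dist_eq]
          exact dist_le_pi_dist a b j
      _ = m * dist a b := by simp [Finset.sum_const, nsmul_eq_mul]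
  -- Lipschitz property of each F s
  have hlip : ∀ (s : ℕ) (a b : Fin m → ℝ), |F s a - F s b| ≤ m * dist a b := by
    intro s a b
    have h1 : F s a ≤ F s b + F s (a - b) := by
      have := map_add_le_add (F s) b (a - b)
      simpa using this
    have h2 : F s b ≤ F s a + F s (b - a) := by
      have := map_add_le_add (F s) a (b - a)
      simpa using this
    have hab : F s (a - b) ≤ m * dist a b :=
      (hup s (a - b)).trans (by simpa using hsum a b)
    have hba : F s (b - a) ≤ m * dist a b := by
      have : F s (b - a) ≤ ∑ j, |b j - a j| := hup s (b - a)
      refine this.trans ?_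
      have : (∑ j, |b j - a j|) = ∑ j, |a j - b j| := by
        congr 1; ext j; rw [abs_sub_comm]
      rw [this]; exact hsum a b
    rw [abs_sub_le_iff]
    constructor <;> linarith
  -- Lipschitz property of Flim
  have hliplim : ∀ a b : Fin m → ℝ, |Flim a - Flim b| ≤ m * dist a b := by
    intro a b
    have ht : Tendsto (fun s => |F s a - F s b|) atTop (nhds |Flim a - Flim b|) :=
      ((hconv a).sub (hconv b)).abs
    exact le_of_tendsto ht (Eventually.of_forall fun s => hlip s a b)
  -- lower bound for Flim
  have hlowlim : ∀ (a : Fin m → ℝ) (j : Fin m), |a j| ≤ Flim a := by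
    intro a j
    exact ge_of_tendsto (hconv a) (Eventually.of_forall fun s => hlow s a j)
  set η := ε / (3 * m) with hη
  have hηpos : 0 < η := by positivity
  have hδpos : 0 < η / m := by positivity
  -- finite net of the closed unit ball
  obtain ⟨T, hTfin, hTcov⟩ :=
    (Metric.totallyBounded_iff.mp
      ((isCompact_closedBall (0 : Fin m → ℝ) 1).totallyBounded)) (η / m) hδpos
  -- eventual closeness at net points
  have hev : ∀ᶠ s in atTop, ∀ b ∈ T, |F s b - Flim b| < η := by
    rw [hTfin.eventually_all]
    intro b _
    have := (hconv b).eventually (eventually_abs_sub_lt (Flim b) hηpos)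
    filter_upwards [this] with s hs
    exact hs
  obtain ⟨s₀, hs₀⟩ := eventually_atTop.mp hev
  refine ⟨s₀, fun s hs a => ?_⟩
  -- uniform estimate on the ℓ¹ sphere
  have key : ∀ u : Fin m → ℝ, (∑ j, |u j|) = 1 → |F s u - Flim u| ≤ 3 * η := by
    intro u hu
    have humem : u ∈ Metric.closedBall (0 : Fin m → ℝ) 1 := by
      rw [mem_closedBall_zero_iff]
      rw [pi_norm_le_iff_of_nonneg zero_le_one]
      intro j
      rw [Real.norm_eq_abs]
      calc |u j| ≤ ∑ i, |u i| :=
            Finset.single_le_sum (fun i _ => abs_nonneg (u i)) (Finset.mem_univ j)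
        _ = 1 := hu
    obtain ⟨b, hbT, hub⟩ := Set.mem_iUnion₂.mp (hTcov humem)
    have hdist : dist u b < η / m := Metric.mem_ball.mp hub
    have h1 : |F s u - F s b| ≤ η := by
      have := hlip s u b
      have : |F s u - F s b| ≤ m * (η / m) :=
        this.trans (by nlinarith [hdist, hm'])
      rwa [mul_div_cancel₀ _ (ne_of_gt hm')] at this
    have h2 : |F s b - Flim b| < η := hs₀ s hs b hbT
    have h3 : |Flim b - Flim u| ≤ η := by
      have := hliplim b u
      have hd : dist b u < η / m := by rwa [dist_comm]
      have : |Flim b - Flim u| ≤ m * (η / m) :=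
        this.trans (by nlinarith [hd, hm'])
      rwa [mul_div_cancel₀ _ (ne_of_gt hm')] at this
    calc |F s u - Flim u|
        ≤ |F s u - F s b| + |F s b - Flim b| + |Flim b - Flim u| := by
          have := abs_sub_le (F s u) (F s b) (Flim u)
          have := abs_sub_le (F s b) (Flim b) (Flim u)
          have := abs_sub_le (F s u) (Flim b) (Flim u)
          calc |F s u - Flim u| ≤ |F s u - F s b| + |F s b - Flim u| :=
                abs_sub_le _ _ _
            _ ≤ |F s u - F s b| + (|F s b - Flim b| + |Flim b - Flim u|) := by
                exact add_le_add le_rfl (abs_sub_le _ _ _)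
            _ = _ := by ring
      _ ≤ 3 * η := by linarith
  -- conclude for arbitrary a
  by_cases ha : a = 0
  · subst ha
    have h0 : F s 0 = 0 := map_zero (F s)
    have h0' : Flim 0 = 0 := by
      have : Tendsto (fun _ : ℕ => (0:ℝ)) atTop (nhds (Flim 0)) := by
        simpa [h0] using hconv 0
      exact (tendsto_nhds_unique tendsto_const_nhds this).symm
    simp [h0, h0']
  · set t := ∑ j, |a j| with htdef
    have htpos : 0 < t := by
      obtain ⟨j, hj⟩ := Function.ne_iff.mp ha
      have : 0 < |a j| := abs_pos.mpr hj
      have hle : |a j| ≤ t := Finset.single_le_sum (fun i _ => abs_nonneg (a i)) (Finset.mem_univ j)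
      linarith
    set u := t⁻¹ • a with hudef
    have hu1 : (∑ j, |u j|) = 1 := by
      have : (∑ j, |u j|) = t⁻¹ * t := by
        rw [htdef, Finset.mul_sum]
        congr 1; ext j
        simp [hudef, abs_mul, abs_of_pos (inv_pos.mpr htpos)]
        exact Or.inl htdef
      rw [this, inv_mul_cancel₀ (ne_of_gt htpos)]
    have hFsu : F s a = t * F s u := by
      have : F s u = |t⁻¹| * F s a := map_smul_eq_mul (F s) t⁻¹ a
      rw [abs_of_pos (inv_pos.mpr htpos)] at this
      rw [this, ← mul_assoc, mul_inv_cancel₀ (ne_of_gt htpos), one_mul]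
    have hFlu : Flim a = t * Flim u := by
      have h1 : Tendsto (fun s => F s u) atTop (nhds (Flim u)) := hconv u
      have h2 : Tendsto (fun s => t⁻¹ * F s a) atTop (nhds (t⁻¹ * Flim a)) :=
        (hconv a).const_mul _
      have heq : (fun s => F s u) = fun s => t⁻¹ * F s a := by
        ext s'
        have : F s' u = |t⁻¹| * F s' a := map_smul_eq_mul (F s') t⁻¹ a
        rwa [abs_of_pos (inv_pos.mpr htpos)] at this
      rw [heq] at h1
      have := tendsto_nhds_unique h1 h2
      rw [this, ← mul_assoc, mul_inv_cancel₀ (ne_of_gt htpos), one_mul]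
    -- lower bounds on the sphere
    have hFsu_lb : 1 / m ≤ F s u := by
      have : (1:ℝ) = ∑ j, |u j| := hu1.symm
      have hsum_le : (∑ j, |u j|) ≤ ∑ _j : Fin m, F s u :=
        Finset.sum_le_sum (fun j _ => hlow s u j)
      have : (1:ℝ) ≤ m * F s u := by
        rw [hu1.symm]
        simpa [Finset.sum_const, nsmul_eq_mul] using hsum_le
      rw [div_le_iff₀ hm']
      linarith
    have hFlu_lb : 1 / m ≤ Flim u := by
      have hsum_le : (∑ j, |u j|) ≤ ∑ _j : Fin m, Flim u :=
        Finset.sum_le_sum (fun j _ => hlowlim u j)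
      have : (1:ℝ) ≤ m * Flim u := by
        rw [hu1.symm]
        simpa [Finset.sum_const, nsmul_eq_mul] using hsum_le
      rw [div_le_iff₀ hm']
      linarith
    have hkey := key u hu1
    have h3η : 3 * η = ε / m := by
      rw [hη]; field_simp
    rw [h3η] at hkey
    have habs := abs_sub_le_iff.mp hkey
    constructor
    · rw [hFsu, hFlu]
      have : Flim u ≤ (1 + ε) * F s u := by
        have h1 : Flim u ≤ F s u + ε / m := by linarith [habs.2]
        have h2 : ε / m ≤ ε * F s u := by
          rw [div_le_iff₀ hm'] at hFsu_lb ⊢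
          nlinarith
        linarith
      nlinarith
    · rw [hFsu, hFlu]
      have : F s u ≤ (1 + ε) * Flim u := by
        have h1 : F s u ≤ Flim u + ε / m := by linarith [habs.1]
        have h2 : ε / m ≤ ε * Flim u := by
          rw [div_le_iff₀ hm'] at hFlu_lb ⊢
          nlinarith
        linarith
      nlinarith
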